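/- Let δ > 0 and let u₁, u₂ : [0,1] → ℝ be continuous with u₁(0) = u₂(0) = 0 and uᵢ(x) − uᵢ(x') ≥ δ(x − x') whenever 0 ≤ x' ≤ x ≤ 1 (i = 1,2). Let y ∈ [0, u₂(1)] and let U₂ ∈ [0,1] satisfy u₂(U₂) = y. Define U₁ ∈ [0,1] by u₁(U₁) = y if y ≤ u₁(1), and U₁ = 1 if y > u₁(1). Then δ |U₁ − U₂| ≤ |u₁(U₂) − u₂(U₂)|. -/
import Mathlib


open Set MeasureTheory

/-- Comparison estimate (inequality (40-2) of Lemma 4.2) for the inverse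
functions of two uniformly increasing functions on [0,1], the inverse of u₁
being extended by the constant value 1 beyond u₁(1). -/
theorem inverse_comparison (δ : ℝ) (hδ : 0 < δ) (u₁ u₂ : ℝ → ℝ)
    (hc1 : Continuous u₁) (hc2 : Continuous u₂)
    (h10 : u₁ 0 = 0) (h20 : u₂ 0 = 0)
    (hmono1 : ∀ x' x : ℝ, 0 ≤ x' → x' ≤ x → x ≤ 1 → δ * (x - x') ≤ u₁ x - u₁ x')
    (hmono2 : ∀ x' x : ℝ, 0 ≤ x' → x' ≤ x → x ≤ 1 → δ * (x - x') ≤ u₂ x - u₂ x')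
    (y : ℝ) (hy : y ∈ Icc 0 (u₂ 1))
    (U₂ : ℝ) (hU₂ : U₂ ∈ Icc (0:ℝ) 1) (hU₂y : u₂ U₂ = y)
    (U₁ : ℝ) (hU₁ : U₁ ∈ Icc (0:ℝ) 1)
    (hU₁le : y ≤ u₁ 1 → u₁ U₁ = y) (hU₁gt : u₁ 1 < y → U₁ = 1) :
    δ * |U₁ - U₂| ≤ |u₁ U₂ - u₂ U₂| := by
  rcases le_or_gt y (u₁ 1) with hle | hgt
  · have hU₁y := hU₁le hle
    have key : u₁ U₂ - u₂ U₂ = u₁ U₂ - u₁ U₁ := by rw [hU₁y, hU₂y]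
    rw [key]
    rcases le_total U₁ U₂ with h | h
    · have := hmono1 U₁ U₂ hU₁.1 h hU₂.2
      have hn : 0 ≤ δ * (U₂ - U₁) := mul_nonneg hδ.le (by linarith)
      rw [abs_of_nonpos (by linarith), abs_of_nonneg (by linarith)]
      linarith
    · have := hmono1 U₂ U₁ hU₂.1 h hU₁.2
      have hn : 0 ≤ δ * (U₁ - U₂) := mul_nonneg hδ.le (by linarith)
      rw [abs_of_nonneg (by linarith), abs_of_nonpos (by linarith)]
      linarith
  · have hU1 := hU₁gt hgt
    subst hU1
    have h := hmono1 U₂ 1 hU₂.1 hU₂.2 le_rfl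
    have hn : 0 ≤ δ * (1 - U₂) := mul_nonneg hδ.le (by linarith [hU₂.2])
    have : u₁ U₂ < u₂ U₂ := by rw [hU₂y]; linarith
    rw [abs_of_nonneg (by linarith [hU₂.2]), abs_of_nonpos (by linarith)]
    rw [hU₂y]; linarith
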